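/- Let 0 < θ* ≤ θ, let p_{θ*}(y) = (1/(2√(2π)))(e^{−(y−θ*)²/2} + e^{−(y+θ*)²/2}), let q(y;θ) = 1/(1 + e^{2yθ}), and define f(θ) = −∫_ℝ q(y;θ) y p_{θ*}(y) dy. Then f(θ) − f(θ*) ≤ ∫_ℝ |y| ( e^{−2|y|θ*} − e^{−2|y|θ} ) p_{θ*}(y) dy. -/

import Mathlib

open MeasureTheory

/-- Auxiliary: `|y| * exp (-b y²)` is integrable for `b > 0`. -/
lemma aux_abs_mul_exp_integrable {b : ℝ} (hb : 0 < b) :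
    Integrable fun y : ℝ => |y| * Real.exp (-b * y ^ 2) := by
  have h := (integrable_rpow_mul_exp_neg_mul_sq hb (s := 1) (by norm_num)).abs
  simpa [abs_mul, Real.abs_exp, Real.rpow_one] using h

/-- Auxiliary pointwise key inequality. -/
lemma aux_key_ineq (θstar θ y : ℝ) (h1 : 0 < θstar) (h2 : θstar ≤ θ) :
    (1 / (1 + Real.exp (2 * y * θstar)) - 1 / (1 + Real.exp (2 * y * θ))) * y ≤
      |y| * (Real.exp (-(2 * |y| * θstar)) - Real.exp (-(2 * |y| * θ))) := by
  rcases le_total 0 y with hy | hy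
  · rw [abs_of_nonneg hy, Real.exp_neg, Real.exp_neg]
    set a := Real.exp (2 * y * θstar) with ha_def
    set b := Real.exp (2 * y * θ) with hb_def
    have ha : 0 < a := Real.exp_pos _
    have hbp : 0 < b := Real.exp_pos _
    have ha1 : 1 ≤ a := Real.one_le_exp (by positivity)
    have hab : a ≤ b := Real.exp_le_exp.mpr (by nlinarith)
    have key : 1 / (1 + a) - 1 / (1 + b) ≤ a⁻¹ - b⁻¹ := by
      have h1a : (0:ℝ) < 1 + a := by linarith
      have h1b : (0:ℝ) < 1 + b := by linarith
      rw [div_sub_div _ _ h1a.ne' h1b.ne', inv_eq_one_div, inv_eq_one_div,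
        div_sub_div _ _ ha.ne' hbp.ne', div_le_div_iff₀ (by positivity) (by positivity)]
      nlinarith [mul_nonneg (sub_nonneg.mpr hab) (show (0:ℝ) ≤ 1 + a + b by positivity)]
    have := mul_le_mul_of_nonneg_right key hy
    nlinarith [this]
  · rw [abs_of_nonpos hy,
      show -(2 * -y * θstar) = 2 * y * θstar from by ring,
      show -(2 * -y * θ) = 2 * y * θ from by ring]
    set a := Real.exp (2 * y * θstar) with ha_def
    set b := Real.exp (2 * y * θ) with hb_def
    have ha : 0 < a := Real.exp_pos _
    have hbp : 0 < b := Real.exp_pos _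
    have hba : b ≤ a := Real.exp_le_exp.mpr (by nlinarith)
    have key : 1 / (1 + b) - 1 / (1 + a) ≤ a - b := by
      have h1a : (0:ℝ) < 1 + a := by linarith
      have h1b : (0:ℝ) < 1 + b := by linarith
      rw [div_sub_div _ _ h1b.ne' h1a.ne', one_mul, mul_one,
        show (1:ℝ) + a - (1 + b) = a - b from by ring,
        div_le_iff₀ (by positivity)]
      nlinarith [mul_nonneg ha.le hbp.le]
    have := mul_le_mul_of_nonneg_right key (neg_nonneg.mpr hy)
    nlinarith [this]

/-- intermediate bound in the proof of Theorem 3, item 3, for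
`f(θ) = −E[q(Y;θ) Y]` under the symmetric two-component Gaussian mixture. -/
theorem gradient_difference_intermediate_bound
    (θstar θ : ℝ) (h1 : 0 < θstar) (h2 : θstar ≤ θ)
    (p : ℝ → ℝ)
    (hp : p = fun y => (1 / (2 * Real.sqrt (2 * Real.pi))) *
      (Real.exp (-(y - θstar) ^ 2 / 2) + Real.exp (-(y + θstar) ^ 2 / 2)))
    (q : ℝ → ℝ → ℝ)
    (hq : q = fun θ' y => 1 / (1 + Real.exp (2 * y * θ')))
    (f : ℝ → ℝ)
    (hf : f = fun θ' => -∫ y : ℝ, q θ' y * y * p y) :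
    f θ - f θstar ≤
      ∫ y : ℝ, |y| * (Real.exp (-(2 * |y| * θstar)) - Real.exp (-(2 * |y| * θ))) * p y := by
  subst hp hq hf
  simp only
  set c : ℝ := 1 / (2 * Real.sqrt (2 * Real.pi)) with hc_def
  have hc : 0 < c := by
    have : (0:ℝ) < Real.sqrt (2 * Real.pi) := Real.sqrt_pos.mpr (by positivity)
    positivity
  set P : ℝ → ℝ := fun y => c *
      (Real.exp (-(y - θstar) ^ 2 / 2) + Real.exp (-(y + θstar) ^ 2 / 2)) with hP_def
  have hPnn : ∀ y, 0 ≤ P y := fun y => by positivity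
  have hPmeas : Measurable P := by
    apply Measurable.const_mul
    exact ((measurable_id.sub_const θstar).pow_const 2 |>.neg.div_const 2).exp.add
      ((measurable_id.add_const θstar).pow_const 2 |>.neg.div_const 2).exp
  -- integrability of the dominating function |y| * P y
  have hgInt : Integrable (fun y : ℝ => |y| * P y) := by
    apply Integrable.mono'
      (((aux_abs_mul_exp_integrable (b := (1:ℝ)/4) (by norm_num)).const_mul
        (2 * c * Real.exp (θstar ^ 2 / 2))))
      ((measurable_abs.mul hPmeas).aestronglyMeasurable)
    filter_upwards with y
    rw [Real.norm_eq_abs, Pi.mul_apply, abs_of_nonneg (mul_nonneg (abs_nonneg y) (hPnn y))]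
    have e1 : Real.exp (-(y - θstar) ^ 2 / 2) ≤
        Real.exp (θstar ^ 2 / 2) * Real.exp (-(1/4) * y ^ 2) := by
      rw [← Real.exp_add]
      exact Real.exp_le_exp.mpr (by nlinarith [sq_nonneg (y - 2 * θstar)])
    have e2 : Real.exp (-(y + θstar) ^ 2 / 2) ≤
        Real.exp (θstar ^ 2 / 2) * Real.exp (-(1/4) * y ^ 2) := by
      rw [← Real.exp_add]
      exact Real.exp_le_exp.mpr (by nlinarith [sq_nonneg (y + 2 * θstar)])
    have := add_le_add e1 e2
    have habs := abs_nonneg y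
    calc |y| * P y = |y| * (c * (Real.exp (-(y - θstar) ^ 2 / 2) +
          Real.exp (-(y + θstar) ^ 2 / 2))) := rfl
      _ ≤ |y| * (c * (2 * (Real.exp (θstar ^ 2 / 2) * Real.exp (-(1/4) * y ^ 2)))) := by
          apply mul_le_mul_of_nonneg_left _ habs
          apply mul_le_mul_of_nonneg_left _ hc.le
          linarith
      _ = 2 * c * Real.exp (θstar ^ 2 / 2) * (|y| * Real.exp (-(1/4) * y ^ 2)) := by ring
  -- bounds on q
  have hq01 : ∀ θ' y : ℝ, 0 ≤ 1 / (1 + Real.exp (2 * y * θ')) ∧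
      1 / (1 + Real.exp (2 * y * θ')) ≤ 1 := by
    intro θ' y
    have h := Real.exp_pos (2 * y * θ')
    constructor
    · positivity
    · rw [div_le_one (by linarith)]; linarith
  -- integrability of each q-term
  have hqmeas : ∀ θ' : ℝ, Measurable fun y : ℝ => 1 / (1 + Real.exp (2 * y * θ')) := by
    intro θ'
    exact (measurable_const.div ((measurable_const.add
      ((measurable_id.const_mul 2 |>.mul_const θ').exp))))
  have hqInt : ∀ θ' : ℝ,
      Integrable fun y : ℝ => (1 / (1 + Real.exp (2 * y * θ'))) * y * P y := by
    intro θ'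
    apply hgInt.mono' (((hqmeas θ').mul measurable_id).mul hPmeas).aestronglyMeasurable
    filter_upwards with y
    rw [Real.norm_eq_abs]; simp only [Pi.mul_apply, id_eq]
    rw [abs_mul, abs_mul, abs_of_nonneg (hPnn y),
      abs_of_nonneg (hq01 θ' y).1]
    calc 1 / (1 + Real.exp (2 * y * θ')) * |y| * P y ≤ 1 * |y| * P y := by
          apply mul_le_mul_of_nonneg_right _ (hPnn y)
          exact mul_le_mul_of_nonneg_right (hq01 θ' y).2 (abs_nonneg y)
      _ = |y| * P y := by ring
  -- integrability of the RHS integrand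
  have hex01 : ∀ y : ℝ, 0 ≤ Real.exp (-(2 * |y| * θstar)) - Real.exp (-(2 * |y| * θ)) ∧
      Real.exp (-(2 * |y| * θstar)) - Real.exp (-(2 * |y| * θ)) ≤ 1 := by
    intro y
    have h1' : Real.exp (-(2 * |y| * θ)) ≤ Real.exp (-(2 * |y| * θstar)) :=
      Real.exp_le_exp.mpr (by nlinarith [abs_nonneg y])
    have h2' : Real.exp (-(2 * |y| * θstar)) ≤ 1 :=
      Real.exp_le_one_iff.mpr (by nlinarith [abs_nonneg y])
    have := (Real.exp_pos (-(2 * |y| * θ))).le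
    exact ⟨by linarith, by linarith⟩
  have hRInt : Integrable fun y : ℝ =>
      |y| * (Real.exp (-(2 * |y| * θstar)) - Real.exp (-(2 * |y| * θ))) * P y := by
    apply hgInt.mono'
    · apply Measurable.aestronglyMeasurable
      apply (measurable_abs.mul _).mul hPmeas
      exact ((measurable_abs.const_mul 2 |>.mul_const θstar).neg.exp.sub
        (measurable_abs.const_mul 2 |>.mul_const θ).neg.exp)
    · filter_upwards with y
      rw [Real.norm_eq_abs, abs_mul, abs_mul, abs_abs, abs_of_nonneg (hPnn y),
        abs_of_nonneg (hex01 y).1]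
      calc |y| * (Real.exp (-(2 * |y| * θstar)) - Real.exp (-(2 * |y| * θ))) * P y
          ≤ |y| * 1 * P y := by
            apply mul_le_mul_of_nonneg_right _ (hPnn y)
            exact mul_le_mul_of_nonneg_left (hex01 y).2 (abs_nonneg y)
        _ = |y| * P y := by ring
  -- rewrite f θ - f θstar as a single integral
  have hdiff : (-∫ y : ℝ, (1 / (1 + Real.exp (2 * y * θ))) * y * P y) -
      (-∫ y : ℝ, (1 / (1 + Real.exp (2 * y * θstar))) * y * P y) =
      ∫ y : ℝ, ((1 / (1 + Real.exp (2 * y * θstar))) * y * P y -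
        (1 / (1 + Real.exp (2 * y * θ))) * y * P y) := by
    rw [integral_sub (hqInt θstar) (hqInt θ)]; ring
  rw [hdiff]
  apply integral_mono (Integrable.sub (hqInt θstar) (hqInt θ)) hRInt
  intro y
  have hk := aux_key_ineq θstar θ y h1 h2
  have := mul_le_mul_of_nonneg_right hk (hPnn y)
  simp only [Pi.sub_apply]
  nlinarith [this]
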